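/- Let N ≥ 1, and equip the space of N×N complex matrices with the normalized Hilbert–Schmidt inner product ⟨A,B⟩ = tr(A†B)/N. Let (P_i)_{i∈I} be an orthonormal basis of this matrix space with respect to this inner product. Let G' > 0 and 0 < ε < 1 be real constants, and for each i ∈ I let χ_i, c_i be real numbers. Suppose that for each integer K ≥ 1 we are given a linear map Λ_K on N×N complex matrices with Λ_K(P_i) = λ_{K,i} P_i, where the real numbers λ_{K,i} satisfy |λ_{K,i} − c_i · χ_i^K| ≤ G'·ε^K for all i and K. Define, for each K ≥ 1, the linear map Φ_K by Φ_K(P_i) = c_i χ_i^K P_i. Then for every positive semidefinite N×N matrix ρ with tr(ρ) = 1, every Hermitian Π with 0 ≤ Π ≤ I, and every K ≥ 1: |tr(Π Λ_K(ρ)) − tr(Π Φ_K(ρ))| ≤ G'·√N·ε^K. -/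

import Mathlib

open scoped BigOperators Matrix ComplexOrder

lemma aux_trace_nonneg {n : Type*} [Fintype n] [DecidableEq n]
    {A : Matrix n n ℂ} (hA : A.PosSemidef) : 0 ≤ A.trace := by
  exact hA.trace_nonneg

open scoped MatrixOrder in
lemma aux_eq_conjTranspose_mul_self {n : Type*} [Fintype n] [DecidableEq n]
    {A : Matrix n n ℂ} (hA : A.PosSemidef) : ∃ B : Matrix n n ℂ, A = Bᴴ * B :=
  CStarAlgebra.nonneg_iff_eq_star_mul_self.mp hA.nonneg

lemma aux_trace_mul_nonneg {n : Type*} [Fintype n] [DecidableEq n]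
    {A B : Matrix n n ℂ} (hA : A.PosSemidef) (hB : B.PosSemidef) :
    0 ≤ (A * B).trace := by
  obtain ⟨C, rfl⟩ := aux_eq_conjTranspose_mul_self hA
  have h1 : (Cᴴ * C * B).trace = (C * B * Cᴴ).trace := by
    rw [Matrix.mul_assoc, Matrix.trace_mul_comm, Matrix.mul_assoc]
  rw [h1]
  exact aux_trace_nonneg (hB.mul_mul_conjTranspose_same C)

lemma aux_trace_cthm {n : Type*} [Fintype n] (A : Matrix n n ℂ) :
    (Aᴴ * A).trace = ((∑ i, ∑ j, Complex.normSq (A i j) : ℝ) : ℂ) := by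
  simp only [Matrix.trace, Matrix.diag, Matrix.mul_apply, Matrix.conjTranspose_apply]
  push_cast
  rw [Finset.sum_comm]
  refine Finset.sum_congr rfl fun i _ => Finset.sum_congr rfl fun j _ => ?_
  rw [Complex.normSq_eq_conj_mul_self, starRingEnd_apply, mul_comm]

lemma aux_frob_submul {n : Type*} [Fintype n] (A B : Matrix n n ℂ) :
    ∑ i, ∑ j, Complex.normSq ((A * B) i j) ≤
      (∑ i, ∑ j, Complex.normSq (A i j)) * (∑ i, ∑ j, Complex.normSq (B i j)) := by
  have key : ∀ i j, Complex.normSq ((A * B) i j) ≤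
      (∑ k, Complex.normSq (A i k)) * (∑ k, Complex.normSq (B k j)) := by
    intro i j
    have h1 : ‖(A * B) i j‖ ≤ ∑ k, ‖A i k‖ * ‖B k j‖ := by
      rw [Matrix.mul_apply]
      calc ‖∑ k, A i k * B k j‖ ≤ ∑ k, ‖A i k * B k j‖ := by
            simpa using norm_sum_le Finset.univ (fun k => A i k * B k j)
        _ = ∑ k, ‖A i k‖ * ‖B k j‖ := by
            simp [map_mul]
    have h2 : (∑ k, ‖A i k‖ * ‖B k j‖) ^ 2 ≤
        (∑ k, ‖A i k‖ ^ 2) * (∑ k, ‖B k j‖ ^ 2) :=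
      Finset.sum_mul_sq_le_sq_mul_sq _ _ _
    calc Complex.normSq ((A * B) i j) = ‖(A * B) i j‖ ^ 2 := (Complex.sq_norm _).symm
      _ ≤ (∑ k, ‖A i k‖ * ‖B k j‖) ^ 2 := by
          exact pow_le_pow_left₀ (norm_nonneg _) h1 2
      _ ≤ (∑ k, ‖A i k‖ ^ 2) * (∑ k, ‖B k j‖ ^ 2) := h2
      _ = (∑ k, Complex.normSq (A i k)) * (∑ k, Complex.normSq (B k j)) := by
          simp [Complex.sq_norm]
  calc ∑ i, ∑ j, Complex.normSq ((A * B) i j)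
      ≤ ∑ i, ∑ j, (∑ k, Complex.normSq (A i k)) * (∑ k, Complex.normSq (B k j)) :=
        Finset.sum_le_sum fun i _ => Finset.sum_le_sum fun j _ => key i j
    _ = (∑ i, ∑ k, Complex.normSq (A i k)) * (∑ j, ∑ k, Complex.normSq (B k j)) := by
        rw [← Finset.sum_mul_sum]
    _ = (∑ i, ∑ j, Complex.normSq (A i j)) * (∑ i, ∑ j, Complex.normSq (B i j)) := by
        congr 1
        exact Finset.sum_comm

theorem stmt13 {N : ℕ} (hN : 1 ≤ N) {ι : Type*} [Fintype ι] [DecidableEq ι]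
    (P : Module.Basis ι ℂ (Matrix (Fin N) (Fin N) ℂ))
    (hortho : ∀ i j, (Matrix.trace ((P i)ᴴ * P j)) / (N : ℂ) = if i = j then 1 else 0)
    (G' : ℝ) (hG' : 0 < G')
    (ε : ℝ) (hε0 : 0 < ε) (hε1 : ε < 1)
    (χ c : ι → ℝ)
    (Λ : ℕ → Matrix (Fin N) (Fin N) ℂ →ₗ[ℂ] Matrix (Fin N) (Fin N) ℂ)
    (lam : ℕ → ι → ℝ)
    (hΛ : ∀ K, 1 ≤ K → ∀ i, Λ K (P i) = ((lam K i : ℝ) : ℂ) • P i)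
    (hlam : ∀ K, 1 ≤ K → ∀ i, |lam K i - c i * χ i ^ K| ≤ G' * ε ^ K)
    (Φ : ℕ → Matrix (Fin N) (Fin N) ℂ →ₗ[ℂ] Matrix (Fin N) (Fin N) ℂ)
    (hΦ : ∀ K, 1 ≤ K → ∀ i, Φ K (P i) = ((c i * χ i ^ K : ℝ) : ℂ) • P i) :
    ∀ (ρ : Matrix (Fin N) (Fin N) ℂ), ρ.PosSemidef → ρ.trace = 1 →
      ∀ (Pm : Matrix (Fin N) (Fin N) ℂ), Pm.PosSemidef → (1 - Pm).PosSemidef →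
        ∀ K : ℕ, 1 ≤ K →
          ‖(Pm * Λ K ρ).trace - (Pm * Φ K ρ).trace‖ ≤
            G' * Real.sqrt N * ε ^ K := by
  intro ρ hρ hρtr Pm hPm hPm1 K hK
  have hN0 : (0 : ℝ) < (N : ℝ) := by exact_mod_cast hN
  have hNC : (N : ℂ) ≠ 0 := by exact_mod_cast hN0.ne'
  set a : ι → ℂ := fun i => P.repr ρ i with ha
  set b : ι → ℂ := fun i => P.repr Pm i with hb
  set t : ι → ℂ := fun i => (Pm * P i).trace with ht
  set d : ι → ℝ := fun i => lam K i - c i * χ i ^ K with hd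
  -- orthonormality without division
  have hortho' : ∀ i j, ((P i)ᴴ * P j).trace = if i = j then (N : ℂ) else 0 := by
    intro i j
    have := hortho i j
    rw [div_eq_iff hNC] at this
    rw [this]
    split <;> simp
  -- coefficient formula
  have hcoef : ∀ M : Matrix (Fin N) (Fin N) ℂ, ∀ i,
      ((P i)ᴴ * M).trace = (N : ℂ) * P.repr M i := by
    intro M i
    conv_lhs => rw [← P.sum_repr M]
    rw [Matrix.mul_sum, Matrix.trace_sum]
    simp only [Matrix.mul_smul, Matrix.trace_smul, hortho', smul_eq_mul, mul_ite, mul_zero]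
    rw [Finset.sum_ite_eq Finset.univ i (fun j => P.repr M j * (N : ℂ))]
    simp [mul_comm]
  -- Parseval
  have hpar : ∀ M : Matrix (Fin N) (Fin N) ℂ,
      (Mᴴ * M).trace = (N : ℂ) * ((∑ i, Complex.normSq (P.repr M i) : ℝ) : ℂ) := by
    intro M
    have hMt : Mᴴ = ∑ j, star (P.repr M j) • (P j)ᴴ := by
      conv_lhs => rw [← P.sum_repr M]
      rw [Matrix.conjTranspose_sum]
      refine Finset.sum_congr rfl fun j _ => ?_
      rw [Matrix.conjTranspose_smul]
    have hM : Mᴴ * M = ∑ j, star (P.repr M j) • ((P j)ᴴ * M) := by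
      rw [hMt, Finset.sum_mul]
      exact Finset.sum_congr rfl fun j _ => Matrix.smul_mul _ _ _
    rw [hM, Matrix.trace_sum]
    push_cast
    rw [Finset.mul_sum]
    refine Finset.sum_congr rfl fun j _ => ?_
    rw [Matrix.trace_smul, hcoef M j, smul_eq_mul]
    rw [Complex.normSq_eq_conj_mul_self, starRingEnd_apply]
    ring
  -- |t i| = N * |b i|
  have habs_t : ∀ i, ‖t i‖ = (N : ℝ) * ‖b i‖ := by
    intro i
    have h0 : star (t i) = ((Pm * P i)ᴴ).trace := (Matrix.trace_conjTranspose _).symm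
    have h1 : star (t i) = (N : ℂ) * b i := by
      rw [h0, Matrix.conjTranspose_mul, hPm.1, hcoef]
    have h2 : ‖star (t i)‖ = ‖t i‖ := by
      rw [show star (t i) = (starRingEnd ℂ) (t i) from rfl, Complex.norm_conj]
    rw [← h2, h1, norm_mul, Complex.norm_natCast]
  -- expansion of traces
  have hexp : ∀ (L : Matrix (Fin N) (Fin N) ℂ →ₗ[ℂ] Matrix (Fin N) (Fin N) ℂ)
      (f : ι → ℂ), (∀ i, L (P i) = f i • P i) →
      (Pm * L ρ).trace = ∑ i, a i * f i * t i := by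
    intro L f hL
    have hLρ : L ρ = ∑ i, (a i * f i) • P i := by
      conv_lhs => rw [← P.sum_repr ρ]
      rw [map_sum]
      refine Finset.sum_congr rfl fun i _ => ?_
      rw [map_smul, hL, smul_smul]
    rw [hLρ, Matrix.mul_sum, Matrix.trace_sum]
    refine Finset.sum_congr rfl fun i _ => ?_
    rw [Matrix.mul_smul, Matrix.trace_smul, smul_eq_mul]
  have hdiff : (Pm * Λ K ρ).trace - (Pm * Φ K ρ).trace = ∑ i, a i * (d i : ℂ) * t i := by
    rw [hexp (Λ K) _ (hΛ K hK), hexp (Φ K) _ (hΦ K hK), ← Finset.sum_sub_distrib]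
    refine Finset.sum_congr rfl fun i _ => ?_
    rw [hd]
    push_cast
    ring
  rw [hdiff]
  -- the three key real bounds
  have hA2 : ∑ i, Complex.normSq (a i) ≤ 1 / N := by
    have hpρ : (ρᴴ * ρ).trace = (N : ℂ) * ((∑ i, Complex.normSq (a i) : ℝ) : ℂ) := hpar ρ
    rw [hρ.1] at hpρ
    obtain ⟨B, hB⟩ := aux_eq_conjTranspose_mul_self hρ
    set F : Matrix (Fin N) (Fin N) ℂ → ℝ := fun A => ∑ i, ∑ j, Complex.normSq (A i j) with hF
    have hFB : ((F B : ℝ) : ℂ) = 1 := by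
      rw [hF]
      dsimp only
      rw [← aux_trace_cthm B, ← hB, hρtr]
    have hFB' : F B = 1 := by exact_mod_cast hFB
    have htr : (ρ * ρ).trace = ((F (B * Bᴴ) : ℝ) : ℂ) := by
      rw [hF]
      dsimp only
      rw [← aux_trace_cthm (B * Bᴴ)]
      rw [show (B * Bᴴ)ᴴ = B * Bᴴ by
        rw [Matrix.conjTranspose_mul, Matrix.conjTranspose_conjTranspose]]
      rw [hB]
      simp only [Matrix.mul_assoc]
      rw [Matrix.trace_mul_comm]
      simp only [Matrix.mul_assoc]
    have hFBH : F Bᴴ = F B := by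
      rw [hF]
      dsimp only
      rw [Finset.sum_comm]
      refine Finset.sum_congr rfl fun i _ => Finset.sum_congr rfl fun j _ => ?_
      rw [Matrix.conjTranspose_apply]
      exact Complex.normSq_conj _
    have hle : F (B * Bᴴ) ≤ 1 := by
      calc F (B * Bᴴ) ≤ F B * F Bᴴ := aux_frob_submul B Bᴴ
        _ = 1 := by rw [hFBH, hFB']; ring
    have heq : (N : ℝ) * (∑ i, Complex.normSq (a i)) = F (B * Bᴴ) := by
      have : ((((N : ℝ) * ∑ i, Complex.normSq (a i)) : ℝ) : ℂ) = ((F (B * Bᴴ) : ℝ) : ℂ) := by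
        push_cast
        rw [← htr, hpρ]
        push_cast
        ring
      exact_mod_cast this
    rw [le_div_iff₀ hN0]
    calc (∑ i, Complex.normSq (a i)) * N = N * ∑ i, Complex.normSq (a i) := by ring
      _ = F (B * Bᴴ) := heq
      _ ≤ 1 := hle
  have hB2 : ∑ i, Complex.normSq (b i) ≤ 1 := by
    have hpp : (Pmᴴ * Pm).trace = (N : ℂ) * ((∑ i, Complex.normSq (b i) : ℝ) : ℂ) := hpar Pm
    rw [hPm.1] at hpp
    have h1 : 0 ≤ (Pm * (1 - Pm)).trace := aux_trace_mul_nonneg hPm hPm1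
    have h1' : (Pm * Pm).trace ≤ Pm.trace := by
      rw [show Pm * (1 - Pm) = Pm - Pm * Pm by rw [Matrix.mul_sub, Matrix.mul_one],
        Matrix.trace_sub] at h1
      exact sub_nonneg.mp h1
    have h2 : Pm.trace ≤ (N : ℂ) := by
      have h3 : 0 ≤ (1 - Pm).trace := aux_trace_nonneg hPm1
      rw [Matrix.trace_sub, Matrix.trace_one] at h3
      have h4 := sub_nonneg.mp h3
      simpa using h4
    have h6 : (N : ℂ) * ((∑ i, Complex.normSq (b i) : ℝ) : ℂ) ≤ ((N : ℝ) : ℂ) := by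
      rw [← hpp]
      exact_mod_cast le_trans h1' h2
    have h5 : (N : ℝ) * ∑ i, Complex.normSq (b i) ≤ (N : ℝ) := by
      have h7 : (((N : ℝ) * ∑ i, Complex.normSq (b i) : ℝ) : ℂ) ≤ ((N : ℝ) : ℂ) := by
        push_cast
        push_cast at h6
        exact h6
      exact_mod_cast h7
    nlinarith [Finset.sum_nonneg (fun i (_ : i ∈ Finset.univ) => Complex.normSq_nonneg (b i))]
  -- Cauchy-Schwarz
  have hab_nonneg : (0:ℝ) ≤ ∑ i, ‖a i‖ * ‖b i‖ :=
    Finset.sum_nonneg fun i _ => mul_nonneg (norm_nonneg _) (norm_nonneg _)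
  have hCS : ∑ i, ‖a i‖ * ‖b i‖ ≤ Real.sqrt (1 / N) := by
    have h1 : (∑ i, ‖a i‖ * ‖b i‖) ^ 2 ≤
        (∑ i, ‖a i‖ ^ 2) * (∑ i, ‖b i‖ ^ 2) :=
      Finset.sum_mul_sq_le_sq_mul_sq _ _ _
    have h2 : (∑ i, ‖a i‖ ^ 2) * (∑ i, ‖b i‖ ^ 2) ≤ (1 / N) * 1 := by
      apply mul_le_mul
      · simpa [Complex.sq_norm] using hA2
      · simpa [Complex.sq_norm] using hB2
      · exact Finset.sum_nonneg fun i _ => sq_nonneg _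
      · positivity
    rw [mul_one] at h2
    have := le_trans h1 h2
    calc ∑ i, ‖a i‖ * ‖b i‖
        = Real.sqrt ((∑ i, ‖a i‖ * ‖b i‖) ^ 2) := by
          rw [Real.sqrt_sq hab_nonneg]
      _ ≤ Real.sqrt (1 / N) := Real.sqrt_le_sqrt this
  -- final chain
  calc ‖∑ i, a i * (d i : ℂ) * t i‖
      ≤ ∑ i, ‖a i * (d i : ℂ) * t i‖ := by
        simpa using norm_sum_le Finset.univ (fun i => a i * (d i : ℂ) * t i)
    _ = ∑ i, ‖a i‖ * |d i| * ‖t i‖ := by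
        refine Finset.sum_congr rfl fun i _ => ?_
        rw [norm_mul, norm_mul, Complex.norm_real, Real.norm_eq_abs]
    _ ≤ ∑ i, ‖a i‖ * (G' * ε ^ K) * ((N : ℝ) * ‖b i‖) := by
        refine Finset.sum_le_sum fun i _ => ?_
        rw [habs_t i]
        have h1 : |d i| ≤ G' * ε ^ K := hlam K hK i
        have := mul_le_mul_of_nonneg_left h1 (norm_nonneg (a i))
        exact mul_le_mul_of_nonneg_right this
          (mul_nonneg (Nat.cast_nonneg N) (norm_nonneg _))
    _ = (G' * ε ^ K) * (N : ℝ) * ∑ i, ‖a i‖ * ‖b i‖ := by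
        rw [Finset.mul_sum]
        refine Finset.sum_congr rfl fun i _ => ?_
        ring
    _ ≤ (G' * ε ^ K) * (N : ℝ) * Real.sqrt (1 / N) := by
        apply mul_le_mul_of_nonneg_left hCS
        positivity
    _ = G' * Real.sqrt N * ε ^ K := by
        rw [one_div, Real.sqrt_inv]
        rw [show (G' * ε ^ K) * (N : ℝ) * (Real.sqrt N)⁻¹ =
          G' * ((N : ℝ) / Real.sqrt N) * ε ^ K by ring]
        rw [Real.div_sqrt]
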